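/- arXiv:0903.2058 — 2 statements merged into one kernel-verified Lean document; each statement's English description precedes it below -/
import Mathlib

section
/- Let L be the negative definite root lattice of 3A₅ ⊕ 3A₁ with A₅ chains e₁…e₅, e₆…e₁₀, e₁₁…e₁₅ and A₁'s e₁₆, e₁₇, e₁₈, and N = ℤλ ⊕ L with λ² = 2. Define u₁ = (Σ_{i=1}^{5} i(e_{i+5}+e_{i+10}) + e₁₇ + e₁₈)/2 and v₁ = (Σ_{i=1}^{5} i(e_i+e_{i+10}) + e₁₆ + e₁₈)/2. Then u₁ and v₁ pair integrally with all of N, have even square, and the lattice A₁ generated by N, u₁, v₁ is an even overlattice of N of index 4. -/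
open Matrix

/-- Dynkin-diagram edges for 3A₅ ⊕ 3A₁ (index 0 reserved for λ):
A₅ chains e₁…e₅, e₆…e₁₀, e₁₁…e₁₅; A₁'s e₁₆, e₁₇, e₁₈. -/
def adj : List (ℕ × ℕ) :=
  [(1,2),(2,3),(3,4),(4,5),
   (6,7),(7,8),(8,9),(9,10),
   (11,12),(12,13),(13,14),(14,15)]

/-- Gram matrix of N = ℤλ ⊕ L(3A₅+3A₁): λ² = 2, roots of square −2. -/
def gramN : Matrix (Fin 19) (Fin 19) ℚ := fun i j =>
  if i = j then (if i.val = 0 then 2 else -2)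
  else if (i.val, j.val) ∈ adj ∨ (j.val, i.val) ∈ adj then 1 else 0

/-- The bilinear form extended ℚ-bilinearly. -/
def form (x y : Fin 19 → ℚ) : ℚ := x ⬝ᵥ gramN.mulVec y

/-- The lattice N: integer coordinate vectors. -/
def IntLat : AddSubgroup (Fin 19 → ℚ) where
  carrier := {x | ∀ i, ∃ k : ℤ, x i = (k : ℚ)}
  zero_mem' := fun i => ⟨0, by simp⟩
  add_mem' := by
    intro a b ha hb i
    obtain ⟨p, hp⟩ := ha i; obtain ⟨q, hq⟩ := hb i
    exact ⟨p + q, by simp [hp, hq]⟩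
  neg_mem' := by
    intro a ha i
    obtain ⟨p, hp⟩ := ha i
    exact ⟨-p, by simp [hp]⟩

/-- u₁ = (Σ_{i=1}^{5} i(e_{i+5}+e_{i+10}) + e₁₇ + e₁₈)/2. -/
def u₁ : Fin 19 → ℚ :=
  ![0, 0,0,0,0,0, 1/2,1,3/2,2,5/2, 1/2,1,3/2,2,5/2, 0,1/2,1/2]

/-- v₁ = (Σ_{i=1}^{5} i(e_i+e_{i+10}) + e₁₆ + e₁₈)/2. -/
def v₁ : Fin 19 → ℚ :=
  ![0, 1/2,1,3/2,2,5/2, 0,0,0,0,0, 1/2,1,3/2,2,5/2, 1/2,0,1/2]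

/-- A₁lat: the lattice generated by N, u₁ and v₁. -/
def A₁lat : AddSubgroup (Fin 19 → ℚ) :=
  IntLat ⊔ AddSubgroup.zmultiples u₁ ⊔ AddSubgroup.zmultiples v₁

section Aux

/-- Integer version of the Gram matrix. -/
def gramZ : Matrix (Fin 19) (Fin 19) ℤ := fun i j =>
  if i = j then (if i.val = 0 then 2 else -2)
  else if (i.val, j.val) ∈ adj ∨ (j.val, i.val) ∈ adj then 1 else 0

lemma gramZ_cast (i j : Fin 19) : ((gramZ i j : ℤ) : ℚ) = gramN i j := by
  unfold gramZ gramN; split_ifs <;> norm_num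

lemma gram_symm : gramNᵀ = gramN := by decide

lemma gramZ_symm : ∀ i j : Fin 19, gramZ j i = gramZ i j := by
  intro i j
  unfold gramZ
  by_cases h : i = j
  · subst h; rfl
  · rw [if_neg (Ne.symm h), if_neg h]
    simp only [or_comm]

lemma gramZ_diag : ∀ i : Fin 19, gramZ i i = 2 ∨ gramZ i i = -2 := by decide

lemma form_comm (x y : Fin 19 → ℚ) : form x y = form y x := by
  have h : x ᵥ* gramN = gramN *ᵥ x := by
    conv_lhs => rw [← gram_symm]
    exact Matrix.vecMul_transpose gramN x
  rw [form, form, Matrix.dotProduct_mulVec, h, dotProduct_comm]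

def cu : Fin 19 → ℤ := ![0,0,0,0,0,0,0,0,0,0,-3,0,0,0,0,-3,0,-1,-1]
def cv : Fin 19 → ℤ := ![0,0,0,0,0,-3,0,0,0,0,0,0,0,0,0,-3,-1,0,-1]

set_option maxHeartbeats 2000000 in
lemma vecMul_u : ∀ j, (u₁ ᵥ* gramN) j = ((cu j : ℤ) : ℚ) := by
  intro j
  fin_cases j <;>
    simp [Matrix.vecMul, dotProduct, Fin.sum_univ_succ, gramN, u₁, cu, adj] <;> norm_num

set_option maxHeartbeats 2000000 in
lemma vecMul_v : ∀ j, (v₁ ᵥ* gramN) j = ((cv j : ℤ) : ℚ) := by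
  intro j
  fin_cases j <;>
    simp [Matrix.vecMul, dotProduct, Fin.sum_univ_succ, gramN, v₁, cv, adj] <;> norm_num

lemma form_eval (x : Fin 19 → ℚ) (c : Fin 19 → ℤ) (hc : ∀ j, (x ᵥ* gramN) j = ((c j : ℤ) : ℚ))
    (y : Fin 19 → ℚ) : form x y = ∑ j, (c j : ℚ) * y j := by
  rw [form, Matrix.dotProduct_mulVec, dotProduct]
  exact Finset.sum_congr rfl fun j _ => by rw [hc j]

lemma form_left_int (x : Fin 19 → ℚ) (c : Fin 19 → ℤ) (hc : ∀ j, (x ᵥ* gramN) j = ((c j : ℤ) : ℚ))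
    {w : Fin 19 → ℚ} (hw : w ∈ IntLat) : ∃ k : ℤ, form x w = (k : ℚ) := by
  have hw' : ∀ i, ∃ k : ℤ, w i = (k : ℚ) := hw
  choose m hm using hw'
  refine ⟨∑ j, c j * m j, ?_⟩
  rw [form_eval x c hc]
  push_cast
  exact Finset.sum_congr rfl fun j _ => by rw [hm j]

lemma form_uu : form u₁ u₁ = -16 := by
  rw [form_eval u₁ cu vecMul_u]
  norm_num [cu, u₁, Fin.sum_univ_succ]

lemma form_vv : form v₁ v₁ = -16 := by
  rw [form_eval v₁ cv vecMul_v]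
  norm_num [cv, v₁, Fin.sum_univ_succ]

lemma form_uv : form u₁ v₁ = -8 := by
  rw [form_eval u₁ cu vecMul_u]
  norm_num [cu, v₁, Fin.sum_univ_succ]

lemma even_quad (k : Fin 19 → ℤ) : ∃ s : ℤ, (∑ i, ∑ j, gramZ i j * k i * k j) = 2 * s := by
  have h : ((∑ i, ∑ j, gramZ i j * k i * k j : ℤ) : ZMod 2) = 0 := by
    push_cast
    rw [← Finset.sum_product']
    classical
    rw [← Finset.sum_filter_add_sum_filter_not (Finset.univ ×ˢ Finset.univ)
      (fun p : Fin 19 × Fin 19 => p.1 = p.2)]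
    have h1 : (∑ p ∈ (Finset.univ ×ˢ Finset.univ).filter
        (fun p : Fin 19 × Fin 19 => p.1 = p.2),
        ((gramZ p.1 p.2 : ZMod 2) * (k p.1 : ZMod 2) * (k p.2 : ZMod 2))) = 0 := by
      refine Finset.sum_eq_zero fun p hp => ?_
      have hd : p.1 = p.2 := (Finset.mem_filter.mp hp).2
      have : ((gramZ p.1 p.2 : ℤ) : ZMod 2) = 0 := by
        rcases gramZ_diag p.1 with h | h <;> rw [← hd, h] <;> decide
      rw [this, zero_mul, zero_mul]
    have h2 : (∑ p ∈ (Finset.univ ×ˢ Finset.univ).filter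
        (fun p : Fin 19 × Fin 19 => ¬p.1 = p.2),
        ((gramZ p.1 p.2 : ZMod 2) * (k p.1 : ZMod 2) * (k p.2 : ZMod 2))) = 0 := by
      refine Finset.sum_involution (fun p _ => p.swap) ?_ ?_ ?_ ?_
      · intro p _
        have hg : (gramZ p.swap.1 p.swap.2 : ℤ) = gramZ p.1 p.2 := gramZ_symm p.1 p.2
        simp only [Prod.fst_swap, Prod.snd_swap] at hg ⊢
        rw [hg]
        rw [show ((gramZ p.1 p.2 : ℤ) : ZMod 2) * (k p.2 : ZMod 2) * (k p.1 : ZMod 2)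
            = ((gramZ p.1 p.2 : ℤ) : ZMod 2) * (k p.1 : ZMod 2) * (k p.2 : ZMod 2) by ring]
        exact CharTwo.add_self_eq_zero _
      · intro p hp _
        have hne : p.1 ≠ p.2 := (Finset.mem_filter.mp hp).2
        intro hsw
        have hsw' : p.swap = p := hsw
        have h2 := congrArg Prod.fst hsw'
        simp only [Prod.fst_swap] at h2
        exact hne h2.symm
      · intro p hp
        have hne : p.1 ≠ p.2 := (Finset.mem_filter.mp hp).2
        simp [Finset.mem_filter, Ne.symm hne]
      · intro p _
        exact Prod.swap_swap p
    rw [h1, h2, add_zero]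
  rw [ZMod.intCast_zmod_eq_zero_iff_dvd] at h
  obtain ⟨s, hs⟩ := h
  exact ⟨s, by push_cast at hs; exact_mod_cast hs⟩

lemma form_self_int {w : Fin 19 → ℚ} (hw : w ∈ IntLat) : ∃ s : ℤ, form w w = 2 * (s : ℚ) := by
  have hw' : ∀ i, ∃ k : ℤ, w i = (k : ℚ) := hw
  choose m hm using hw'
  obtain ⟨s, hs⟩ := even_quad m
  refine ⟨s, ?_⟩
  have key : form w w = ((∑ i, ∑ j, gramZ i j * m i * m j : ℤ) : ℚ) := by
    rw [form]
    push_cast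
    rw [dotProduct]
    refine Finset.sum_congr rfl fun i _ => ?_
    rw [Matrix.mulVec, dotProduct, Finset.mul_sum]
    refine Finset.sum_congr rfl fun j _ => ?_
    rw [hm i, hm j, gramZ_cast]
    ring
  rw [key, hs]
  push_cast
  ring

lemma u_mem : u₁ ∈ A₁lat :=
  AddSubgroup.mem_sup_left (AddSubgroup.mem_sup_right (AddSubgroup.mem_zmultiples u₁))

lemma v_mem : v₁ ∈ A₁lat :=
  AddSubgroup.mem_sup_right (AddSubgroup.mem_zmultiples v₁)

lemma mem_decomp {x : Fin 19 → ℚ} (hx : x ∈ A₁lat) :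
    ∃ n ∈ IntLat, ∃ a b : ℤ, x = n + (a : ℚ) • u₁ + (b : ℚ) • v₁ := by
  have hx' : x ∈ (IntLat ⊔ AddSubgroup.zmultiples u₁) ⊔ AddSubgroup.zmultiples v₁ := hx
  obtain ⟨y, hy, z, hz, rfl⟩ := AddSubgroup.mem_sup.mp hx'
  obtain ⟨n, hn, w, hw, rfl⟩ := AddSubgroup.mem_sup.mp hy
  obtain ⟨a, ha⟩ := AddSubgroup.mem_zmultiples_iff.mp hw
  obtain ⟨b, hb⟩ := AddSubgroup.mem_zmultiples_iff.mp hz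
  refine ⟨n, hn, a, b, ?_⟩
  rw [← ha, ← hb, Int.cast_smul_eq_zsmul, Int.cast_smul_eq_zsmul]

lemma form_expand (n m : Fin 19 → ℚ) (a b c d : ℚ) :
    form (n + a • u₁ + b • v₁) (m + c • u₁ + d • v₁)
      = form n m + c * form n u₁ + d * form n v₁ + a * form u₁ m + b * form v₁ m
        + a * c * form u₁ u₁ + a * d * form u₁ v₁ + b * c * form v₁ u₁ + b * d * form v₁ v₁ := by
  simp only [form, Matrix.mulVec_add, Matrix.mulVec_smul, dotProduct_add,
    add_dotProduct, smul_dotProduct, dotProduct_smul, smul_eq_mul]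
  ring

end Aux

section Aux2

def tu : Fin 19 → ℤ := ![0,0,0,0,0,0,1,2,3,4,5,1,2,3,4,5,0,1,1]
def tv : Fin 19 → ℤ := ![0,1,2,3,4,5,0,0,0,0,0,1,2,3,4,5,1,0,1]

lemma two_u : ∀ i, 2 * u₁ i = ((tu i : ℤ) : ℚ) := by
  intro i; fin_cases i <;> norm_num [u₁, tu]

lemma two_v : ∀ i, 2 * v₁ i = ((tv i : ℤ) : ℚ) := by
  intro i; fin_cases i <;> norm_num [v₁, tv]

def toZ2 (q : ℚ) : ZMod 2 := ((2 * q).num : ZMod 2)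

lemma toZ2_int {q : ℚ} {m : ℤ} (h : 2 * q = (m : ℚ)) : toZ2 q = (m : ZMod 2) := by
  rw [toZ2, h, Rat.num_intCast]

lemma coord {x : Fin 19 → ℚ} (hx : x ∈ A₁lat) (i : Fin 19) : ∃ m : ℤ, 2 * x i = (m : ℚ) := by
  obtain ⟨n, hn, a, b, rfl⟩ := mem_decomp hx
  obtain ⟨kn, hk⟩ := hn i
  refine ⟨2 * kn + a * tu i + b * tv i, ?_⟩
  simp only [Pi.add_apply, Pi.smul_apply, smul_eq_mul]
  push_cast
  linear_combination 2 * hk + (a : ℚ) * two_u i + (b : ℚ) * two_v i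

def φ : A₁lat →+ ZMod 2 × ZMod 2 where
  toFun x := (toZ2 (x.1 1), toZ2 (x.1 6))
  map_zero' := by
    have h : toZ2 (0 : ℚ) = 0 := by simp [toZ2]
    simp only [ZeroMemClass.coe_zero, Pi.zero_apply, h, Prod.mk_eq_zero, and_self]
  map_add' x y := by
    obtain ⟨m1, h1⟩ := coord x.2 1
    obtain ⟨m6, h6⟩ := coord x.2 6
    obtain ⟨n1, g1⟩ := coord y.2 1
    obtain ⟨n6, g6⟩ := coord y.2 6
    have e1 : 2 * ((x + y : A₁lat) : Fin 19 → ℚ) 1 = ((m1 + n1 : ℤ) : ℚ) := by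
      push_cast
      simp only [AddSubgroup.coe_add, Pi.add_apply]
      linarith [h1, g1]
    have e6 : 2 * ((x + y : A₁lat) : Fin 19 → ℚ) 6 = ((m6 + n6 : ℤ) : ℚ) := by
      push_cast
      simp only [AddSubgroup.coe_add, Pi.add_apply]
      linarith [h6, g6]
    show (toZ2 _, toZ2 _) = (toZ2 _, toZ2 _) + (toZ2 _, toZ2 _)
    rw [Prod.mk_add_mk, toZ2_int e1, toZ2_int e6, toZ2_int h1, toZ2_int h6,
      toZ2_int g1, toZ2_int g6]
    push_cast
    rfl

lemma u₁_1 : u₁ 1 = 0 := rfl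
lemma u₁_6 : u₁ 6 = 1/2 := rfl
lemma v₁_1 : v₁ 1 = 1/2 := rfl
lemma v₁_6 : v₁ 6 = 0 := rfl

lemma φ_u : φ ⟨u₁, u_mem⟩ = (0, 1) := by
  show (toZ2 (u₁ 1), toZ2 (u₁ 6)) = (0, 1)
  rw [toZ2_int (show 2 * u₁ 1 = ((0 : ℤ) : ℚ) by rw [u₁_1]; norm_num),
    toZ2_int (show 2 * u₁ 6 = ((1 : ℤ) : ℚ) by rw [u₁_6]; norm_num)]
  rfl

lemma φ_v : φ ⟨v₁, v_mem⟩ = (1, 0) := by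
  show (toZ2 (v₁ 1), toZ2 (v₁ 6)) = (1, 0)
  rw [toZ2_int (show 2 * v₁ 1 = ((1 : ℤ) : ℚ) by rw [v₁_1]; norm_num),
    toZ2_int (show 2 * v₁ 6 = ((0 : ℤ) : ℚ) by rw [v₁_6]; norm_num)]
  rfl

lemma φ_uv : φ ⟨u₁ + v₁, add_mem u_mem v_mem⟩ = (1, 1) := by
  show (toZ2 ((u₁ + v₁) 1), toZ2 ((u₁ + v₁) 6)) = (1, 1)
  rw [toZ2_int (show 2 * (u₁ + v₁) 1 = ((1 : ℤ) : ℚ) by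
      rw [Pi.add_apply, u₁_1, v₁_1]; norm_num),
    toZ2_int (show 2 * (u₁ + v₁) 6 = ((1 : ℤ) : ℚ) by
      rw [Pi.add_apply, u₁_6, v₁_6]; norm_num)]
  rfl

lemma φ_surj : Function.Surjective φ := by
  have hc : ∀ z : ZMod 2, z = 0 ∨ z = 1 := by decide
  rintro ⟨c1, c2⟩
  rcases hc c1 with rfl | rfl <;> rcases hc c2 with rfl | rfl
  · exact ⟨0, map_zero φ⟩
  · exact ⟨⟨u₁, u_mem⟩, φ_u⟩
  · exact ⟨⟨v₁, v_mem⟩, φ_v⟩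
  · exact ⟨⟨u₁ + v₁, add_mem u_mem v_mem⟩, φ_uv⟩

lemma ker_φ : φ.ker = IntLat.addSubgroupOf A₁lat := by
  ext x
  rw [AddMonoidHom.mem_ker, AddSubgroup.mem_addSubgroupOf]
  constructor
  · intro h
    obtain ⟨n, hn, a, b, hd⟩ := mem_decomp x.2
    have hn' : ∀ i, ∃ k : ℤ, n i = (k : ℚ) := hn
    choose m hm using hn'
    have e1 : 2 * (x : Fin 19 → ℚ) 1 = ((2 * m 1 + b : ℤ) : ℚ) := by
      rw [hd]
      simp only [Pi.add_apply, Pi.smul_apply, smul_eq_mul]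
      push_cast
      rw [hm 1, u₁_1, v₁_1]
      ring
    have e6 : 2 * (x : Fin 19 → ℚ) 6 = ((2 * m 6 + a : ℤ) : ℚ) := by
      rw [hd]
      simp only [Pi.add_apply, Pi.smul_apply, smul_eq_mul]
      push_cast
      rw [hm 6, u₁_6, v₁_6]
      ring
    have hb : ((2 * m 1 + b : ℤ) : ZMod 2) = 0 := by
      rw [← toZ2_int e1]; exact congrArg Prod.fst h
    have ha : ((2 * m 6 + a : ℤ) : ZMod 2) = 0 := by
      rw [← toZ2_int e6]; exact congrArg Prod.snd h
    rw [ZMod.intCast_zmod_eq_zero_iff_dvd] at hb ha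
    obtain ⟨b', rfl⟩ : (2 : ℤ) ∣ b := (dvd_add_right ⟨m 1, by ring⟩).mp hb
    obtain ⟨a', rfl⟩ : (2 : ℤ) ∣ a := (dvd_add_right ⟨m 6, by ring⟩).mp ha
    intro i
    refine ⟨m i + a' * tu i + b' * tv i, ?_⟩
    rw [hd]
    simp only [Pi.add_apply, Pi.smul_apply, smul_eq_mul]
    push_cast
    linear_combination hm i + (a' : ℚ) * two_u i + (b' : ℚ) * two_v i
  · intro h
    obtain ⟨k1, hk1⟩ := h 1
    obtain ⟨k6, hk6⟩ := h 6
    have e1 : 2 * (x : Fin 19 → ℚ) 1 = ((2 * k1 : ℤ) : ℚ) := by rw [hk1]; push_cast; ring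
    have e6 : 2 * (x : Fin 19 → ℚ) 6 = ((2 * k6 : ℤ) : ℚ) := by rw [hk6]; push_cast; ring
    show (toZ2 _, toZ2 _) = 0
    rw [toZ2_int e1, toZ2_int e6]
    have h2 : ∀ k : ℤ, ((2 * k : ℤ) : ZMod 2) = 0 := by
      intro k
      push_cast
      rw [show (2 : ZMod 2) = 0 from rfl]
      ring
    rw [Prod.mk_eq_zero]
    exact ⟨h2 k1, h2 k6⟩

end Aux2

/-- u₁ and v₁ pair integrally with N and have even square, and the
lattice generated by N, u₁, v₁ is an even overlattice of N of index 4. -/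
theorem threeA5_threeA1_overlattice :
    (∀ w ∈ IntLat, ∃ k : ℤ, form u₁ w = (k : ℚ)) ∧
    (∀ w ∈ IntLat, ∃ k : ℤ, form v₁ w = (k : ℚ)) ∧
    (∃ k : ℤ, form u₁ u₁ = 2 * (k : ℚ)) ∧
    (∃ k : ℤ, form v₁ v₁ = 2 * (k : ℚ)) ∧
    (∀ x ∈ A₁lat, ∃ k : ℤ, form x x = 2 * (k : ℚ)) ∧
    IntLat.relIndex A₁lat = 4 := by
  refine ⟨fun w hw => form_left_int u₁ cu vecMul_u hw,
          fun w hw => form_left_int v₁ cv vecMul_v hw,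
          ⟨-8, by rw [form_uu]; norm_num⟩,
          ⟨-8, by rw [form_vv]; norm_num⟩, ?_, ?_⟩
  · intro x hx
    obtain ⟨n, hn, a, b, rfl⟩ := mem_decomp hx
    obtain ⟨s, hs⟩ := form_self_int hn
    obtain ⟨p, hp⟩ := form_left_int u₁ cu vecMul_u hn
    obtain ⟨q, hq⟩ := form_left_int v₁ cv vecMul_v hn
    refine ⟨s + a * p + b * q - 8 * a * a - 8 * a * b - 8 * b * b, ?_⟩
    rw [form_expand, hs, form_comm n u₁, form_comm n v₁, hp, hq, form_uu, form_vv,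
      form_comm v₁ u₁, form_uv]
    push_cast
    ring
  · have h1 : IntLat.relIndex A₁lat = (IntLat.addSubgroupOf A₁lat).index := rfl
    rw [h1, ← ker_φ, AddSubgroup.index_ker]
    rw [AddMonoidHom.range_eq_top.mpr φ_surj]
    rw [Nat.card_congr AddSubgroup.topEquiv.toEquiv]
    simp [Nat.card_eq_fintype_card]
end

section
/- Let C₂ be the sextic curve defined by (x₁x₂+3x₀x₁+8x₀²+3x₀x₂)(3x₁³x₂+x₀x₁³−2x₁²x₂²+3x₀x₁²x₂+3x₁x₂³+3x₀x₁x₂²+x₀x₂³) = 0 and Q the conic x₀x₁+x₀x₂+x₁x₂ = 0. Then Q passes through all four points (1:0:0), (1:−2:−2), (0:1:0), (0:0:1), and the intersection multiplicity of Q with the quartic factor of C₂ at (1:0:0) is 4. -/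
/-- The conic Q: x₀x₁ + x₀x₂ + x₁x₂ = 0. -/
def Q (x : Fin 3 → ℂ) : ℂ := x 0 * x 1 + x 0 * x 2 + x 1 * x 2

/-- The quartic factor of the sextic C₂:
3x₁³x₂ + x₀x₁³ − 2x₁²x₂² + 3x₀x₁²x₂ + 3x₁x₂³ + 3x₀x₁x₂² + x₀x₂³. -/
def quartic (x : Fin 3 → ℂ) : ℂ :=
  3 * (x 1) ^ 3 * x 2 + x 0 * (x 1) ^ 3 - 2 * (x 1) ^ 2 * (x 2) ^ 2 +
    3 * x 0 * (x 1) ^ 2 * x 2 + 3 * x 1 * (x 2) ^ 3 + 3 * x 0 * x 1 * (x 2) ^ 2 +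
    x 0 * (x 2) ^ 3

/-- The quartic in the affine chart x₀ = 1. -/
def f (x y : ℂ) : ℂ := quartic ![1, x, y]

/-- Q passes through all four singular points of C₂, and the
intersection multiplicity of Q with the quartic factor at (1:0:0) is 4.
The multiplicity statement is expressed via the smooth local parametrization
t ↦ (t, −t/(1+t)) of the branch of Q through the origin of the chart x₀ = 1
(Q: x + y + xy = 0 gives y = −x/(1+x)): the pullback of the quartic along it
vanishes to order exactly 4 at t = 0. -/
theorem conic_quartic_intersection :
    Q ![1, 0, 0] = 0 ∧ Q ![1, -2, -2] = 0 ∧ Q ![0, 1, 0] = 0 ∧ Q ![0, 0, 1] = 0 ∧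
    ∃ (m : ℕ) (w : Polynomial ℂ),
      (∀ t : ℂ, t ≠ -1 → (1 + t) ^ m * f t (-t / (1 + t)) = t ^ 4 * w.eval t) ∧
      w.eval 0 ≠ 0 := by
  refine ⟨by simp [Q], by norm_num [Q, Matrix.cons_val_two], by simp [Q], by simp [Q],
    3, Polynomial.C (-2) * Polynomial.X ^ 2 + Polynomial.C (-8) * Polynomial.X
      + Polynomial.C (-8), ?_, by norm_num⟩
  intro t ht
  have h : (1 : ℂ) + t ≠ 0 := fun h => ht (by linear_combination h)
  set y : ℂ := -t / (1 + t) with hy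
  have key : (1 + t) * y = -t := by rw [hy]; field_simp
  simp only [f, quartic, Matrix.cons_val_zero, Matrix.cons_val_one, Matrix.head_cons,
    Matrix.cons_val_two, Matrix.tail_cons, Polynomial.eval_add, Polynomial.eval_mul,
    Polynomial.eval_pow, Polynomial.eval_C, Polynomial.eval_X]
  linear_combination ((3*t^3 + 7*t^2 + 5*t + 1) * y^2 + (-2*t^4 - 4*t^3 + 2*t) * y
    + (3*t^5 + 11*t^4 + 11*t^3 + t^2)) * key
end
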